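/- Let A ∈ ℂ^{n×n}, let λ be an eigenvalue with one-dimensional null space of A - λI containing the unit vector v, and let W = [v, W_⊥] ∈ ℂ^{n×m} have full column rank with range(W) containing v. For any Ω ∈ ℂ^{n×m} such that Ωᴴ (A - λI) W_⊥ has rank m-1, the vector e₁ ∈ ℂ^m satisfies Ωᴴ (A - λI) W e₁ = 0 and the null space of the m×m matrix Ωᴴ (A - λI) W is exactly span{e₁}. -/

import Mathlib

open Matrix

/-- Euclidean norm of a complex vector. -/
noncomputable def cenorm {n : ℕ} (x : Fin n → ℂ) : ℝ :=
  ‖(WithLp.equiv 2 (Fin n → ℂ)).symm x‖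

/-- The n × (k+1) matrix whose first column is `w` and whose remaining columns are `M`. -/
def aug {n k : ℕ} (w : Fin n → ℂ) (M : Matrix (Fin n) (Fin k) ℂ) :
    Matrix (Fin n) (Fin (k + 1)) ℂ :=
  Matrix.of fun i j => Fin.cases (w i) (fun j' => M i j') j

lemma aug_mulVec {n k : ℕ} (w : Fin n → ℂ) (M : Matrix (Fin n) (Fin k) ℂ)
    (y : Fin (k + 1) → ℂ) :
    (aug w M).mulVec y = y 0 • w + M.mulVec (fun l => y l.succ) := by
  funext i
  simp [Matrix.mulVec, dotProduct, aug, Fin.sum_univ_succ, mul_comm]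

theorem stmt_5 (n k : ℕ) (A : Matrix (Fin n) (Fin n) ℂ) (μ : ℂ)
    (v : Fin n → ℂ) (hv : (A - μ • 1).mulVec v = 0) (hvunit : cenorm v = 1)
    (hker : ∀ z : Fin n → ℂ, (A - μ • 1).mulVec z = 0 → ∃ c : ℂ, z = c • v)
    (W : Matrix (Fin n) (Fin k) ℂ)
    (hrank : (aug v W).rank = k + 1)
    (Ω : Matrix (Fin n) (Fin (k + 1)) ℂ)
    (hΩ : (Ωᴴ * ((A - μ • 1) * W)).rank = k) :
    (Ωᴴ * ((A - μ • 1) * aug v W)).mulVec ((Pi.single 0 1 : Fin (k + 1) → ℂ)) = 0 ∧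
    ∀ y : Fin (k + 1) → ℂ,
      (Ωᴴ * ((A - μ • 1) * aug v W)).mulVec y = 0 ↔
        ∃ c : ℂ, y = c • (Pi.single 0 1 : Fin (k + 1) → ℂ) := by
  set T := A - μ • 1 with hT
  set M := Ωᴴ * (T * W) with hM
  -- the key formula
  have key : ∀ y : Fin (k + 1) → ℂ,
      (Ωᴴ * (T * aug v W)).mulVec y = M.mulVec (fun l => y l.succ) := by
    intro y
    have h1 : (Ωᴴ * (T * aug v W)).mulVec y
        = Ωᴴ.mulVec (T.mulVec ((aug v W).mulVec y)) := by
      rw [Matrix.mulVec_mulVec, Matrix.mulVec_mulVec, Matrix.mul_assoc]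
    rw [h1, aug_mulVec, Matrix.mulVec_add, Matrix.mulVec_smul, hv, smul_zero, zero_add,
      Matrix.mulVec_mulVec, Matrix.mulVec_mulVec, Matrix.mul_assoc]
  -- injectivity of M.mulVec from rank
  have hker' : LinearMap.ker M.mulVecLin = ⊥ := by
    have h2 := LinearMap.finrank_range_add_finrank_ker M.mulVecLin
    rw [Module.finrank_fintype_fun_eq_card] at h2
    simp only [Fintype.card_fin] at h2
    have hr : Module.finrank ℂ (LinearMap.range M.mulVecLin) = k := hΩ
    rw [hr] at h2
    have : Module.finrank ℂ (LinearMap.ker M.mulVecLin) = 0 := by omega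
    exact Submodule.finrank_eq_zero.mp this
  have hinj : ∀ x : Fin k → ℂ, M.mulVec x = 0 → x = 0 := by
    intro x hx
    have : x ∈ LinearMap.ker M.mulVecLin := hx
    rw [hker'] at this
    simpa using this
  have tail_single : (fun l : Fin k => (Pi.single 0 1 : Fin (k + 1) → ℂ) l.succ) = 0 := by
    funext l
    exact Pi.single_eq_of_ne (Fin.succ_ne_zero l) 1
  constructor
  · rw [key, tail_single, Matrix.mulVec_zero]
  · intro y
    constructor
    · intro hy
      rw [key] at hy
      have htail := hinj _ hy
      refine ⟨y 0, ?_⟩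
      funext j
      refine Fin.cases ?_ ?_ j
      · simp
      · intro l
        have h0 : y l.succ = 0 := congrFun htail l
        simp [h0, Pi.single_eq_of_ne (Fin.succ_ne_zero l)]
    · rintro ⟨c, rfl⟩
      rw [key]
      have : (fun l : Fin k => (c • (Pi.single 0 1 : Fin (k + 1) → ℂ)) l.succ) = 0 := by
        funext l
        simp [Pi.single_eq_of_ne (Fin.succ_ne_zero l)]
      rw [this, Matrix.mulVec_zero]
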